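/- Let r ≥ 1 and let G be a θ_{r+1}-free graph. Then for every vertex u of G, the subgraph of G induced on the neighborhood N_G(u) contains no path on r+2 vertices (i.e., G[N_G(u)] is P_{r+2}-free). -/

import Mathlib

open SimpleGraph Finset

attribute [local instance] Classical.propDecidable

/-- The spectral radius (largest adjacency eigenvalue) of a graph on `Fin n`. -/
noncomputable def adjSpectralRadius {n : ℕ} (G : SimpleGraph (Fin n)) : ℝ :=
  sSup (spectrum ℝ (G.adjMatrix ℝ))

/-- `G` contains a copy of `H` (a subgraph isomorphic to `H`). -/
def Contains {α β : Type*} (G : SimpleGraph α) (H : SimpleGraph β) : Prop :=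
  ∃ f : β ↪ α, ∀ a b, H.Adj a b → G.Adj (f a) (f b)

/-- The book `B_s`: `s` triangles sharing a common edge, i.e. `K_{2,s}` plus the
edge inside the part of size two. -/
def book (s : ℕ) : SimpleGraph (Fin 2 ⊕ Fin s) :=
  SimpleGraph.fromRel (fun x _ => x.isLeft = true)

/-- The theta graph `θ_{r+1} = θ(1,2,r+1)`: vertices `0,…,r+1` form a path of length
`r+1`, the edge `0 ~ (r+1)`, and vertex `r+2` is adjacent to `0` and `r+1`. -/
def theta (r : ℕ) : SimpleGraph (Fin (r + 3)) :=
  SimpleGraph.fromRel (fun x y =>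
    (x.val + 1 = y.val ∧ y.val ≤ r + 1) ∨
    (x.val = 0 ∧ y.val = r + 1) ∨
    (x.val = r + 2 ∧ (y.val = 0 ∨ y.val = r + 1)))

/-- The number of edges of a graph. -/
noncomputable def edgeCount {V : Type*} (G : SimpleGraph V) : ℕ := G.edgeSet.ncard

/-- The number of ordered pairs `(a,b) ∈ s × t` with `a ~ b`.  For disjoint `s` and `t`
this is the number `e(s,t)` of edges between `s` and `t`; for `s = t` it is `2·e(s)`. -/
noncomputable def ordPairs {V : Type*} (G : SimpleGraph V) (s t : Finset V) : ℕ :=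
  ((s ×ˢ t).filter fun p => G.Adj p.1 p.2).card

/-- The number of edges inside a vertex subset `s`. -/
noncomputable def edgesIn {V : Type*} (G : SimpleGraph V) (s : Finset V) : ℕ :=
  (G.induce (s : Set V)).edgeSet.ncard

/-- In a `θ_{r+1}`-free graph, the subgraph induced on any neighborhood is
`P_{r+2}`-free. -/
theorem stmt18 {V : Type*} (r : ℕ) (hr : 1 ≤ r) (G : SimpleGraph V)
    (hfree : ¬ Contains G (theta r)) (u : V) :
    ¬ Contains (G.induce (G.neighborSet u)) (pathGraph (r + 2)) := by
  rintro ⟨f, hf⟩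
  apply hfree
  have hmem : ∀ k : Fin (r + 2), G.Adj u ((f k : V)) := fun k => (f k).2
  have hpath : ∀ (i : ℕ) (h : i + 1 < r + 2),
      G.Adj ((f ⟨i, by omega⟩ : V)) ((f ⟨i + 1, h⟩ : V)) := by
    intro i h
    have := hf ⟨i, by omega⟩ ⟨i + 1, h⟩ ?_
    · exact this
    · rw [SimpleGraph.pathGraph_adj]; left; rfl
  set g : Fin (r + 3) → V :=
    fun i => if h : i.val = 0 then u else (f ⟨i.val - 1, by omega⟩ : V) with hg
  have hgne : ∀ i : Fin (r + 3), ∀ h : i.val ≠ 0,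
      g i = (f ⟨i.val - 1, by omega⟩ : V) := by
    intro i h; rw [hg]; exact dif_neg h
  have hg0 : ∀ i : Fin (r + 3), i.val = 0 → g i = u := by intro i h; rw [hg]; exact dif_pos h
  have ginj : Function.Injective g := by
    intro i j hij
    by_cases hi : i.val = 0 <;> by_cases hj : j.val = 0
    · exact Fin.ext (by omega)
    · exfalso; rw [hg0 i hi, hgne j hj] at hij
      exact (hmem _).ne hij
    · exfalso; rw [hg0 j hj, hgne i hi] at hij
      exact (hmem _).ne hij.symm
    · rw [hgne i hi, hgne j hj] at hij
      have h2 := f.injective (Subtype.coe_injective hij)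
      have h3 : i.val - 1 = j.val - 1 := by
        simpa using congrArg Fin.val h2
      exact Fin.ext (by omega)
  refine ⟨⟨g, ginj⟩, ?_⟩
  have key : ∀ a b : Fin (r + 3),
      ((a.val + 1 = b.val ∧ b.val ≤ r + 1) ∨
       (a.val = 0 ∧ b.val = r + 1) ∨
       (a.val = r + 2 ∧ (b.val = 0 ∨ b.val = r + 1))) → G.Adj (g a) (g b) := by
    intro a b hrel
    rcases hrel with ⟨hab, hb⟩ | ⟨ha, hb⟩ | ⟨ha, hb | hb⟩
    · by_cases h0 : a.val = 0
      · rw [hg0 a h0, hgne b (by omega)]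
        exact hmem _
      · rw [hgne a h0, hgne b (by omega)]
        have hp := hpath (a.val - 1) (by omega)
        have e : (⟨b.val - 1, by omega⟩ : Fin (r + 2)) = ⟨a.val - 1 + 1, by omega⟩ :=
          Fin.ext (show b.val - 1 = a.val - 1 + 1 by omega)
        rw [e]; exact hp
    · rw [hg0 a ha, hgne b (by omega)]
      exact hmem _
    · rw [hgne a (by omega), hg0 b hb]
      exact (hmem _).symm
    · rw [hgne a (by omega), hgne b (by omega)]
      have hp := (hpath (b.val - 1) (by omega)).symm
      have e : (⟨a.val - 1, by omega⟩ : Fin (r + 2)) = ⟨b.val - 1 + 1, by omega⟩ :=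
        Fin.ext (show a.val - 1 = b.val - 1 + 1 by omega)
      rw [e]; exact hp
  intro a b hab
  rw [theta, SimpleGraph.fromRel_adj] at hab
  obtain ⟨hne, h | h⟩ := hab
  · exact key a b h
  · exact (key b a h).symm
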